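/- Let q' be an ideal of A_{q,n} generated by q−1 elements u_2, …, u_q of m whose residue classes in m/m² form a basis of the image of Ω_1 in m/m², where Ω_1 is the k-span of x_2, …, x_q. Then: (a) there is a unique k-algebra homomorphism φ : A_{q,n} → k[z]/(z^n) with φ(x_1) = z̄ and ker(φ) = q'; and (b) there is a unique k-linear map γ : Ω_1 → S, where S is the k-span of x_1², …, x_1^{n−1} in A_{q,n}, such that q' is generated by the elements x_2 − γ(x_2), …, x_q − γ(x_q). -/

import Mathlib

set_option synthInstance.maxHeartbeats 400000
set_option maxHeartbeats 4000000

noncomputable section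

/-- The ring of `n`-nil polynomials `A_{q,n} = k[x_1,…,x_q]/m_0^n`. -/
abbrev Aqn (k : Type) [Field k] (q n : ℕ) : Type :=
  MvPolynomial (Fin q) k ⧸
    (Ideal.span (Set.range (MvPolynomial.X : Fin q → MvPolynomial (Fin q) k))) ^ n

/-- The image of the variable `x_i` in `A_{q,n}`. -/
def xA (k : Type) [Field k] (q n : ℕ) (i : Fin q) : Aqn k q n :=
  Ideal.Quotient.mk _ (MvPolynomial.X i)

/-- The maximal ideal `m` of `A_{q,n}` generated by `x_1, …, x_q`. -/
def mA (k : Type) [Field k] (q n : ℕ) : Ideal (Aqn k q n) :=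
  Ideal.span (Set.range (xA k q n))

/-- `m²` viewed as a `k`-subspace of `A_{q,n}`. -/
def m2k (k : Type) [Field k] (q n : ℕ) : Submodule k (Aqn k q n) :=
  Submodule.restrictScalars k ((mA k q n) ^ 2)

/-- The `k`-linear span `Ω_1` of `x_2, …, x_q` in `A_{q,n}`. -/
def Omega1A (k : Type) [Field k] (q n : ℕ) [NeZero q] : Submodule k (Aqn k q n) :=
  Submodule.span k {y | ∃ i : Fin q, i ≠ 0 ∧ y = xA k q n i}

/-- The `k`-linear span `S` of `x_1², …, x_1^(n-1)` in `A_{q,n}`. -/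
def SA (k : Type) [Field k] (q n : ℕ) [NeZero q] : Submodule k (Aqn k q n) :=
  Submodule.span k {y | ∃ j : ℕ, 2 ≤ j ∧ j ≤ n - 1 ∧ y = xA k q n 0 ^ j}

namespace NPAux

variable (k : Type) [Field k] (q n : ℕ)

/-- the quotient map -/
abbrev mk0 : MvPolynomial (Fin q) k →+* Aqn k q n := Ideal.Quotient.mk _

lemma mA_eq_map :
    mA k q n = Ideal.map (mk0 k q n)
      (Ideal.span (Set.range (MvPolynomial.X : Fin q → MvPolynomial (Fin q) k))) := by
  rw [Ideal.map_span, ← Set.range_comp]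
  rfl

lemma mA_pow : mA k q n ^ n = ⊥ := by
  rw [mA_eq_map, ← Ideal.map_pow, Ideal.map_quotient_self]

lemma xA_mem_mA (i : Fin q) : xA k q n i ∈ mA k q n := Ideal.subset_span ⟨i, rfl⟩

lemma xA_pow_zero (i : Fin q) {j : ℕ} (hj : n ≤ j) : xA k q n i ^ j = 0 := by
  have h1 : xA k q n i ^ j ∈ mA k q n ^ j := Ideal.pow_mem_pow (xA_mem_mA k q n i) j
  have h2 : mA k q n ^ j ≤ mA k q n ^ n := Ideal.pow_le_pow_right hj
  have := h2 h1
  rwa [mA_pow, Ideal.mem_bot] at this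

/-- evaluation at the origin -/
def epsA (hn : n ≠ 0) : Aqn k q n →ₐ[k] k :=
  Ideal.Quotient.liftₐ _ (MvPolynomial.aeval (fun _ : Fin q => (0 : k))) (by
    intro a ha
    have h1 : Ideal.span (Set.range (MvPolynomial.X : Fin q → MvPolynomial (Fin q) k)) ≤
        RingHom.ker (MvPolynomial.aeval (fun _ : Fin q => (0 : k)) : MvPolynomial (Fin q) k →ₐ[k] k) := by
      rw [Ideal.span_le]
      rintro _ ⟨i, rfl⟩
      simp [RingHom.mem_ker]
    have := (Ideal.pow_le_self hn).trans h1 ha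
    simpa [RingHom.mem_ker] using this)

lemma sub_C_eval_mem (p : MvPolynomial (Fin q) k) :
    p - MvPolynomial.C (MvPolynomial.aeval (fun _ : Fin q => (0 : k)) p) ∈
      Ideal.span (Set.range (MvPolynomial.X : Fin q → MvPolynomial (Fin q) k)) := by
  induction p using MvPolynomial.induction_on with
  | C a => simp
  | add p1 p2 h1 h2 =>
      have : (p1 + p2) - MvPolynomial.C (MvPolynomial.aeval (fun _ : Fin q => (0:k)) (p1 + p2))
          = (p1 - MvPolynomial.C (MvPolynomial.aeval (fun _ : Fin q => (0:k)) p1))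
            + (p2 - MvPolynomial.C (MvPolynomial.aeval (fun _ : Fin q => (0:k)) p2)) := by
        rw [map_add, map_add]; ring
      rw [this]; exact add_mem h1 h2
  | mul_X p i _ =>
      have : (p * MvPolynomial.X i) -
          MvPolynomial.C (MvPolynomial.aeval (fun _ : Fin q => (0:k)) (p * MvPolynomial.X i))
          = p * MvPolynomial.X i := by simp
      rw [this]
      exact Ideal.mul_mem_left _ _ (Ideal.subset_span ⟨i, rfl⟩)

lemma sub_eps_mem (hn : n ≠ 0) (a : Aqn k q n) :
    a - algebraMap k (Aqn k q n) (epsA k q n hn a) ∈ mA k q n := by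
  obtain ⟨p, rfl⟩ := Ideal.Quotient.mk_surjective a
  have heval : epsA k q n hn (mk0 k q n p) = MvPolynomial.aeval (fun _ : Fin q => (0:k)) p := by
    have := Ideal.Quotient.liftₐ_comp ((Ideal.span (Set.range (MvPolynomial.X : Fin q → MvPolynomial (Fin q) k))) ^ n) (MvPolynomial.aeval (fun _ : Fin q => (0 : k))) ?_
    · exact DFunLike.congr_fun this p
    · intro a ha
      have h1 : Ideal.span (Set.range (MvPolynomial.X : Fin q → MvPolynomial (Fin q) k)) ≤
          RingHom.ker (MvPolynomial.aeval (fun _ : Fin q => (0 : k)) : MvPolynomial (Fin q) k →ₐ[k] k) := by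
        rw [Ideal.span_le]
        rintro _ ⟨i, rfl⟩
        simp [RingHom.mem_ker]
      have := (Ideal.pow_le_self hn).trans h1 ha
      simpa [RingHom.mem_ker] using this
  have halg : algebraMap k (Aqn k q n) (MvPolynomial.aeval (fun _ : Fin q => (0:k)) p)
      = mk0 k q n (MvPolynomial.C (MvPolynomial.aeval (fun _ : Fin q => (0:k)) p)) := by
    rw [show (MvPolynomial.C : k →+* MvPolynomial (Fin q) k) = algebraMap k _ from rfl]
    exact ((Ideal.Quotient.mkₐ k _).commutes _).symm
  rw [heval, halg, ← map_sub, mA_eq_map]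
  exact Ideal.mem_map_of_mem _ (sub_C_eval_mem k q p)

lemma idealSpan_le (hn : n ≠ 0) (G : Set (Aqn k q n)) :
    Submodule.restrictScalars k (Ideal.span G) ≤
      Submodule.span k G ⊔ Submodule.restrictScalars k (mA k q n * Ideal.span G) := by
  intro x hx
  refine Submodule.span_induction (p := fun x _ => x ∈ Submodule.span k G ⊔
      Submodule.restrictScalars k (mA k q n * Ideal.span G)) ?_ ?_ ?_ ?_ hx
  · intro g hg
    exact Submodule.mem_sup_left (Submodule.subset_span hg)
  · exact zero_mem _
  · intro y z _ _ hy hz; exact add_mem hy hz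
  · intro a y hyG hy
    have hdec : a • y = (epsA k q n hn a) • y
        + (a - algebraMap k (Aqn k q n) (epsA k q n hn a)) * y := by
      rw [smul_eq_mul, Algebra.smul_def (epsA k q n hn a) y]; ring
    rw [hdec]
    refine add_mem (Submodule.smul_mem _ _ hy) (Submodule.mem_sup_right ?_)
    exact Ideal.mul_mem_mul (sub_eps_mem k q n hn a) hyG


lemma pow_key [NeZero q] (hn : n ≠ 0) (q' : Ideal (Aqn k q n))
    (hx : ∀ i : Fin q, i ≠ 0 → xA k q n i ∈ Submodule.restrictScalars k q' ⊔ m2k k q n) :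
    ∀ s : ℕ, 1 ≤ s → Submodule.restrictScalars k (mA k q n ^ s) ≤
      Submodule.restrictScalars k q' ⊔ Submodule.span k {xA k q n 0 ^ s}
        ⊔ Submodule.restrictScalars k (mA k q n ^ (s+1)) := by
  have base : Submodule.restrictScalars k (mA k q n ^ 1) ≤
      Submodule.restrictScalars k q' ⊔ Submodule.span k {xA k q n 0 ^ 1}
        ⊔ Submodule.restrictScalars k (mA k q n ^ 2) := by
    rw [pow_one]
    refine (idealSpan_le k q n hn (Set.range (xA k q n))).trans ?_
    refine sup_le ?_ ?_
    · rw [Submodule.span_le]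
      rintro _ ⟨i, rfl⟩
      by_cases hi : i = 0
      · subst hi
        exact Submodule.mem_sup_left (Submodule.mem_sup_right
          (Submodule.subset_span (by rw [pow_one]; exact rfl)))
      · refine Submodule.mem_sup.2 ?_
        rcases Submodule.mem_sup.1 (hx i hi) with ⟨y, hy, z, hz, hyz⟩
        exact ⟨y, Submodule.mem_sup_left hy, z, hz, hyz⟩
    · intro y hy
      refine Submodule.mem_sup_right ?_
      have : mA k q n * mA k q n = mA k q n ^ 2 := (sq (mA k q n)).symm
      rw [← this]; exact hy
  intro s hs
  induction s with
  | zero => omega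
  | succ t ih =>
    rcases Nat.eq_or_lt_of_le hs with h1 | h1
    · rw [← h1]; exact base
    · have ht : 1 ≤ t := by omega
      have iht := ih ht
      intro x hxm
      have hxm' : x ∈ mA k q n ^ t * mA k q n := by
        exact (pow_succ (mA k q n) t).le hxm
      refine Submodule.mul_induction_on hxm' ?_ (fun y z hy hz => add_mem hy hz)
      intro a ha bb hbb
      obtain ⟨y, hy, h, hh, hsum⟩ := Submodule.mem_sup.1 (iht ha)
      obtain ⟨w, hw, t1, ht1, hsum2⟩ := Submodule.mem_sup.1 hy
      obtain ⟨cc, hcc⟩ := Submodule.mem_span_singleton.1 ht1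
      have hab : a * bb = w * bb + cc • (xA k q n 0 ^ t * bb) + h * bb := by
        rw [← hsum, ← hsum2, ← hcc]; rw [add_mul, add_mul, smul_mul_assoc]
      rw [hab]
      refine add_mem (add_mem ?_ (Submodule.smul_mem _ _ ?_)) ?_
      · exact Submodule.mem_sup_left (Submodule.mem_sup_left (Ideal.mul_mem_right bb q' hw))
      · -- x1^t * bb
        obtain ⟨y', hy', h', hh', hsum'⟩ := Submodule.mem_sup.1 (base (by rw [pow_one]; exact hbb))
        obtain ⟨w', hw', t1', ht1', hsum2'⟩ := Submodule.mem_sup.1 hy'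
        obtain ⟨cc', hcc'⟩ := Submodule.mem_span_singleton.1 ht1'
        have hexp : xA k q n 0 ^ t * bb
            = xA k q n 0 ^ t * w' + cc' • (xA k q n 0 ^ (t+1)) + xA k q n 0 ^ t * h' := by
          rw [← hsum', ← hsum2', ← hcc']
          rw [mul_add, mul_add, mul_smul_comm, pow_one, pow_succ]
        rw [hexp]
        refine add_mem (add_mem ?_ (Submodule.smul_mem _ _ ?_)) ?_
        · exact Submodule.mem_sup_left (Submodule.mem_sup_left (Ideal.mul_mem_left q' _ hw'))
        · exact Submodule.mem_sup_left (Submodule.mem_sup_right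
            (Submodule.subset_span rfl))
        · refine Submodule.mem_sup_right ?_
          have : xA k q n 0 ^ t * h' ∈ mA k q n ^ t * mA k q n ^ 2 :=
            Ideal.mul_mem_mul (Ideal.pow_mem_pow (xA_mem_mA k q n 0) t) hh'
          have heq : mA k q n ^ t * mA k q n ^ 2 = mA k q n ^ (t + 1 + 1) := by
            exact (pow_add (mA k q n) t 2).symm
          rw [heq] at this; exact this
      · refine Submodule.mem_sup_right ?_
        have : h * bb ∈ mA k q n ^ (t+1) * mA k q n := Ideal.mul_mem_mul hh hbb
        exact (pow_succ (mA k q n) (t+1)).ge this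

lemma SA_le_m2 [NeZero q] : SA k q n ≤ m2k k q n := by
  rw [SA]
  refine Submodule.span_le.2 ?_
  rintro _ ⟨j, hj2, hjn, rfl⟩
  exact (Ideal.pow_le_pow_right hj2) (Ideal.pow_mem_pow (xA_mem_mA k q n 0) j)

lemma span_pow_le_SA [NeZero q] {s : ℕ} (hs : 2 ≤ s) :
    Submodule.span k {xA k q n 0 ^ s} ≤ SA k q n := by
  rcases le_or_gt s (n-1) with h | h
  · refine Submodule.span_le.2 ?_
    rintro _ rfl
    exact Submodule.subset_span ⟨s, hs, h, rfl⟩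
  · have h0 : xA k q n 0 ^ s = 0 := xA_pow_zero k q n 0 (by omega)
    rw [h0]
    refine Submodule.span_le.2 ?_
    rintro _ rfl
    exact zero_mem _

lemma m2_le [NeZero q] (hn2 : 2 ≤ n) (q' : Ideal (Aqn k q n))
    (hx : ∀ i : Fin q, i ≠ 0 → xA k q n i ∈ Submodule.restrictScalars k q' ⊔ m2k k q n) :
    m2k k q n ≤ Submodule.restrictScalars k q' ⊔ SA k q n := by
  have main : ∀ t : ℕ, ∀ s : ℕ, n ≤ s + t → 2 ≤ s →
      Submodule.restrictScalars k (mA k q n ^ s) ≤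
        Submodule.restrictScalars k q' ⊔ SA k q n := by
    intro t
    induction t with
    | zero =>
      intro s hns _
      intro x hxm
      have h1 : mA k q n ^ s ≤ mA k q n ^ n := Ideal.pow_le_pow_right (by omega)
      have := h1 hxm
      rw [mA_pow, Ideal.mem_bot] at this
      rw [this]; exact zero_mem _
    | succ t ih =>
      intro s hns hs2
      refine (pow_key k q n (by omega) q' hx s (by omega)).trans ?_
      exact sup_le (sup_le le_sup_left ((span_pow_le_SA k q n hs2).trans le_sup_right))
        (ih (s+1) (by omega) (by omega))
  exact main n 2 (by omega) le_rfl

/-- generating polynomials for `SA` -/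
def SPs : Set (Polynomial k) := {p | ∃ j : ℕ, 2 ≤ j ∧ j ≤ n - 1 ∧ p = Polynomial.X ^ j}

lemma SA_eq_map [NeZero q] : SA k q n =
    Submodule.map (Polynomial.aeval (xA k q n 0)).toLinearMap
      (Submodule.span k (SPs k n)) := by
  rw [SA, Submodule.map_span]
  congr 1
  ext y
  constructor
  · rintro ⟨j, h2, h1, rfl⟩
    exact ⟨Polynomial.X ^ j, ⟨j, h2, h1, rfl⟩, by simp⟩
  · rintro ⟨p, ⟨j, h2, h1, rfl⟩, rfl⟩
    exact ⟨j, h2, h1, by simp⟩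

lemma SPs_degree {p : Polynomial k} (hp : p ∈ Submodule.span k (SPs k n)) :
    p.degree < (n : WithBot ℕ) := by
  refine Submodule.span_induction (p := fun p _ => p.degree < (n : WithBot ℕ)) ?_ ?_ ?_ ?_ hp
  · rintro _ ⟨j, h2, h1, rfl⟩
    show (Polynomial.X ^ j : Polynomial k).degree < (n : WithBot ℕ)
    rw [Polynomial.degree_X_pow]
    exact_mod_cast (by omega : j < n)
  · show (0 : Polynomial k).degree < (n : WithBot ℕ)
    rw [Polynomial.degree_zero]; exact WithBot.bot_lt_coe n
  · intro a bb _ _ ha hb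
    exact (Polynomial.degree_add_le a bb).trans_lt (max_lt ha hb)
  · intro c a _ ha
    exact (Polynomial.degree_smul_le c a).trans_lt ha

lemma SPs_aeval {B : Type} [CommRing B] [Algebra k B] (z : B) {p : Polynomial k}
    (hp : p ∈ Submodule.span k (SPs k n)) :
    Polynomial.aeval z p ∈ Ideal.span {z ^ 2} := by
  refine Submodule.span_induction
    (p := fun p _ => Polynomial.aeval z p ∈ Ideal.span {z ^ 2}) ?_ ?_ ?_ ?_ hp
  · rintro _ ⟨j, h2, h1, rfl⟩
    show Polynomial.aeval z (Polynomial.X ^ j) ∈ Ideal.span {z ^ 2}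
    rw [map_pow, Polynomial.aeval_X]
    exact Ideal.mem_span_singleton.2 ⟨z ^ (j - 2), by rw [← pow_add]; congr 1; omega⟩
  · show Polynomial.aeval z (0 : Polynomial k) ∈ Ideal.span {z ^ 2}
    rw [map_zero]; exact zero_mem _
  · intro a bb _ _ ha hb
    show Polynomial.aeval z (a + bb) ∈ Ideal.span {z ^ 2}
    rw [map_add]; exact add_mem ha hb
  · intro c a _ ha
    show Polynomial.aeval z (c • a) ∈ Ideal.span {z ^ 2}
    rw [map_smul, Algebra.smul_def]
    exact Ideal.mul_mem_left _ _ ha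

lemma SA_rep [NeZero q] {s : Aqn k q n} (hs : s ∈ SA k q n) :
    ∃ p : Polynomial k, p ∈ Submodule.span k (SPs k n) ∧
      Polynomial.aeval (xA k q n 0) p = s := by
  rw [SA_eq_map] at hs
  rcases hs with ⟨p, hp, h⟩
  exact ⟨p, hp, h⟩

/-- `k[z]/(z^n)` -/
abbrev PB := Polynomial k ⧸ Ideal.span {(Polynomial.X : Polynomial k) ^ n}

abbrev mkB : Polynomial k →+* PB k n := Ideal.Quotient.mk _

abbrev zB : PB k n := mkB k n Polynomial.X

lemma aeval_zB (p : Polynomial k) : Polynomial.aeval (zB k n) p = mkB k n p := by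
  have := Polynomial.aeval_algHom_apply
    (Ideal.Quotient.mkₐ k (Ideal.span {(Polynomial.X : Polynomial k) ^ n})) Polynomial.X p
  simpa using this

lemma zB_pow_n : zB k n ^ n = 0 := by
  rw [← map_pow]
  exact Ideal.Quotient.eq_zero_iff_mem.2 (Ideal.subset_span rfl)

lemma zB_pow_mem {a c : ℕ} (hc : c ≤ n) (h : zB k n ^ a ∈ Ideal.span {zB k n ^ c}) :
    c ≤ a := by
  have h1 : Ideal.span {zB k n ^ c}
      = Ideal.map (mkB k n) (Ideal.span {(Polynomial.X : Polynomial k) ^ c}) := by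
    rw [Ideal.map_span, Set.image_singleton, map_pow]
  have h2 : (Polynomial.X : Polynomial k) ^ a ∈
      Ideal.span {(Polynomial.X : Polynomial k) ^ c} ⊔
        Ideal.span {(Polynomial.X : Polynomial k) ^ n} := by
    rw [← Ideal.mem_quotient_iff_mem_sup]
    rw [h1] at h
    simpa [map_pow] using h
  have h3 : Ideal.span {(Polynomial.X : Polynomial k) ^ n} ≤
      Ideal.span {(Polynomial.X : Polynomial k) ^ c} :=
    Ideal.span_singleton_le_span_singleton.2 (pow_dvd_pow _ hc)
  rw [sup_eq_left.2 h3] at h2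
  have hdvd : (Polynomial.X : Polynomial k) ^ c ∣ (Polynomial.X : Polynomial k) ^ a :=
    Ideal.mem_span_singleton.1 h2
  have hne : (Polynomial.X : Polynomial k) ^ a ≠ 0 := pow_ne_zero _ Polynomial.X_ne_zero
  have := Polynomial.degree_le_of_dvd hdvd hne
  rw [Polynomial.degree_X_pow, Polynomial.degree_X_pow] at this
  exact_mod_cast this

lemma mkB_inj_small {p : Polynomial k} (h2 : p.degree < (n : ℕ)) (h : mkB k n p = 0) :
    p = 0 := by
  have hdvd : (Polynomial.X : Polynomial k) ^ n ∣ p :=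
    Ideal.mem_span_singleton.1 (Ideal.Quotient.eq_zero_iff_mem.1 h)
  by_contra hne
  have := Polynomial.degree_le_of_dvd hdvd hne
  rw [Polynomial.degree_X_pow] at this
  exact absurd (this.trans_lt h2) (lt_irrefl _)

end NPAux

/-- if `q'` is an ideal of `A_{q,n}` generated by `q-1` elements `u_2, …, u_q`
of `m` whose residue classes form a basis of the image of `Ω_1` in `m/m²`, then:
(a) there is a unique `k`-algebra homomorphism `φ : A_{q,n} → k[z]/(z^n)` with `φ(x_1) = z̄`
and `ker φ = q'`; and (b) there is a unique `k`-linear map `γ : Ω_1 → A_{q,n}` with values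
in `S` such that `q'` is generated by the elements `x_i - γ(x_i)`, `i = 2, …, q`. -/
theorem nil_parameter_ideal_normal_form (k : Type) [Field k] (q n : ℕ) [NeZero q]
    (hq : 2 ≤ q) (hn : 2 ≤ n)
    (q' : Ideal (Aqn k q n))
    (u : {i : Fin q // i ≠ 0} → Aqn k q n)
    (hu : ∀ i, u i ∈ mA k q n)
    (hq' : q' = Ideal.span (Set.range u))
    (b : Module.Basis {i : Fin q // i ≠ 0} k (Submodule.map (m2k k q n).mkQ (Omega1A k q n)))
    (hb : ∀ i, (b i : Aqn k q n ⧸ m2k k q n) = (m2k k q n).mkQ (u i)) :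
    (∃! φ : Aqn k q n →ₐ[k] (Polynomial k ⧸ Ideal.span {(Polynomial.X : Polynomial k) ^ n}),
      φ (xA k q n 0) = Ideal.Quotient.mk _ Polynomial.X ∧ RingHom.ker φ = q') ∧
    (∃! γ : Omega1A k q n →ₗ[k] Aqn k q n,
      (∀ w, γ w ∈ SA k q n) ∧
      q' = Ideal.span {y | ∃ i : {i : Fin q // i ≠ 0},
        y = xA k q n i.1 - γ ⟨xA k q n i.1, Submodule.subset_span ⟨i.1, i.2, rfl⟩⟩}) := by
  classical
  have hn0 : n ≠ 0 := by omega
  have hq'm : q' ≤ mA k q n := by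
    rw [hq', Ideal.span_le]; rintro _ ⟨i, rfl⟩; exact hu i
  have hxΩ : ∀ i : {i : Fin q // i ≠ 0}, xA k q n i.1 ∈ Omega1A k q n :=
    fun i => Submodule.subset_span ⟨i.1, i.2, rfl⟩
  have hΩ : Omega1A k q n
      = Submodule.span k (Set.range fun i : {i : Fin q // i ≠ 0} => xA k q n i.1) := by
    rw [Omega1A]; congr 1; ext y; constructor
    · rintro ⟨i, hi, rfl⟩; exact ⟨⟨i, hi⟩, rfl⟩
    · rintro ⟨i, rfl⟩; exact ⟨i.1, i.2, rfl⟩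
  have hvmem : ∀ i : {i : Fin q // i ≠ 0}, (m2k k q n).mkQ (xA k q n i.1) ∈ Submodule.map (m2k k q n).mkQ (Omega1A k q n) :=
    fun i => Submodule.mem_map_of_mem (hxΩ i)
  set v : {i : Fin q // i ≠ 0} → (Submodule.map (m2k k q n).mkQ (Omega1A k q n)) :=
    fun i => ⟨(m2k k q n).mkQ (xA k q n i.1), hvmem i⟩ with hv_def
  have hsubv : (Submodule.map (m2k k q n).mkQ (Omega1A k q n)).subtype ∘ v
      = fun i => (m2k k q n).mkQ (xA k q n i.1) := rfl
  have hvspan : ⊤ ≤ Submodule.span k (Set.range v) := by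
    have h1 : Submodule.map (Submodule.map (m2k k q n).mkQ (Omega1A k q n)).subtype
        (Submodule.span k (Set.range v))
        = Submodule.map (Submodule.map (m2k k q n).mkQ (Omega1A k q n)).subtype ⊤ := by
      rw [Submodule.map_span, Submodule.map_top, Submodule.range_subtype, ← Set.range_comp,
        hsubv, hΩ, Submodule.map_span, ← Set.range_comp]
      rfl
    have h2 := Submodule.map_injective_of_injective (Submodule.injective_subtype _) h1
    rw [h2]
  haveI : Module.Finite k (Submodule.map (m2k k q n).mkQ (Omega1A k q n)) := Module.Finite.of_basis b
  have hfr : Fintype.card {i : Fin q // i ≠ 0} = Module.finrank k (Submodule.map (m2k k q n).mkQ (Omega1A k q n)) :=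
    (Module.finrank_eq_card_basis b).symm
  have hv : LinearIndependent k v := linearIndependent_of_top_le_span_of_card_eq_finrank hvspan hfr
  have hπx : LinearIndependent k (fun i : {i : Fin q // i ≠ 0} => (m2k k q n).mkQ (xA k q n i.1)) := by
    have := hv.map' (Submodule.map (m2k k q n).mkQ (Omega1A k q n)).subtype (Submodule.ker_subtype _)
    rwa [hsubv] at this
  have hxind : LinearIndependent k (fun i : {i : Fin q // i ≠ 0} => xA k q n i.1) :=
    LinearIndependent.of_comp ((m2k k q n).mkQ) hπx
  set e : {i : Fin q // i ≠ 0} → Omega1A k q n := fun i => ⟨xA k q n i.1, hxΩ i⟩ with he_def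
  have hsube : (Omega1A k q n).subtype ∘ e = fun i => xA k q n i.1 := rfl
  have heind : LinearIndependent k e := by
    apply LinearIndependent.of_comp (Omega1A k q n).subtype
    rwa [hsube]
  have hespan : ⊤ ≤ Submodule.span k (Set.range e) := by
    have h1 : Submodule.map (Omega1A k q n).subtype (Submodule.span k (Set.range e))
        = Submodule.map (Omega1A k q n).subtype ⊤ := by
      rw [Submodule.map_span, Submodule.map_top, Submodule.range_subtype, ← Set.range_comp,
        hsube, hΩ]
    have h2 := Submodule.map_injective_of_injective (Submodule.injective_subtype _) h1
    rw [h2]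
  set eB : Module.Basis {i : Fin q // i ≠ 0} k (Omega1A k q n) := Module.Basis.mk heind hespan with heBdef
  -- normalized generators
  set c : {i : Fin q // i ≠ 0} → {i : Fin q // i ≠ 0} → k := fun i j => b.repr (v i) j with hcdef
  have hvc : ∀ i, (m2k k q n).mkQ (xA k q n i.1) = ∑ j, c i j • (m2k k q n).mkQ (u j) := by
    intro i
    have h1 : (v i : Aqn k q n ⧸ m2k k q n) = ((∑ j, c i j • b j : Submodule.map (m2k k q n).mkQ (Omega1A k q n)) : Aqn k q n ⧸ m2k k q n) := by
      congr 1
      exact (Module.Basis.sum_repr b (v i)).symm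
    have h2 : ((∑ j, c i j • b j : Submodule.map (m2k k q n).mkQ (Omega1A k q n)) : Aqn k q n ⧸ m2k k q n)
        = ∑ j, c i j • ((b j : Aqn k q n ⧸ m2k k q n)) := by
      push_cast
      rfl
    rw [h2] at h1
    simp only [hb] at h1
    exact h1
  set u' : {i : Fin q // i ≠ 0} → Aqn k q n := fun i => ∑ j, c i j • u j with hu'def
  have hu'q : ∀ i, u' i ∈ q' := by
    intro i
    refine Submodule.sum_mem _ ?_
    intro j _
    rw [Algebra.smul_def (c i j) (u j)]
    exact Ideal.mul_mem_left _ _ (by rw [hq']; exact Ideal.subset_span ⟨j, rfl⟩)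
  have hxu' : ∀ i, xA k q n i.1 - u' i ∈ m2k k q n := by
    intro i
    have h1 : (m2k k q n).mkQ (xA k q n i.1 - u' i) = 0 := by
      rw [map_sub, hvc i, hu'def]
      simp [map_sum, map_smul]
    rwa [Submodule.mkQ_apply, Submodule.Quotient.mk_eq_zero] at h1
  have hxd : ∀ i : Fin q, i ≠ 0 → xA k q n i ∈ Submodule.restrictScalars k q' ⊔ m2k k q n := by
    intro i hi
    have h1 : xA k q n i = u' ⟨i, hi⟩ + (xA k q n i - u' ⟨i, hi⟩) := by ring
    rw [h1]
    exact add_mem (Submodule.mem_sup_left (hu'q _)) (Submodule.mem_sup_right (hxu' _))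
  have hm2le : m2k k q n ≤ Submodule.restrictScalars k q' ⊔ SA k q n :=
    NPAux.m2_le k q n hn q' hxd
  have hxs : ∀ i : {i : Fin q // i ≠ 0}, ∃ sa, sa ∈ SA k q n ∧ xA k q n i.1 - sa ∈ q' := by
    intro i
    have h1 : xA k q n i.1 ∈ Submodule.restrictScalars k q' ⊔ SA k q n := by
      have h2 := hxd i.1 i.2
      exact (sup_le le_sup_left hm2le) h2
    rcases Submodule.mem_sup.1 h1 with ⟨w, hw, sa, hsa, hsum⟩
    refine ⟨sa, hsa, ?_⟩
    have : xA k q n i.1 - sa = w := by rw [← hsum]; ring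
    rw [this]; exact hw
  choose s hsSA hws using hxs
  choose σ hσSP hσev using fun i => NPAux.SA_rep k q n (hsSA i)
  -- the algebra map Φ
  set g : Fin q → NPAux.PB k n := fun i =>
    if h : i = 0 then NPAux.zB k n else Polynomial.aeval (NPAux.zB k n) (σ ⟨i, h⟩) with hgdef
  have hg2 : ∀ i : {i : Fin q // i ≠ 0}, g i.1 ∈ Ideal.span {NPAux.zB k n ^ 2} := by
    intro i
    rw [hgdef]
    simp only [dif_neg i.2]
    exact NPAux.SPs_aeval k n _ (hσSP ⟨i.1, i.2⟩)
  have hg1 : ∀ i, g i ∈ Ideal.span {NPAux.zB k n} := by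
    intro i
    by_cases h : i = 0
    · rw [hgdef]; simp only [dif_pos h]; exact Ideal.subset_span rfl
    · refine Ideal.span_singleton_le_span_singleton.2 (dvd_pow_self _ (by omega)) (hg2 ⟨i, h⟩)
  have hker0 : ∀ a ∈ (Ideal.span (Set.range (MvPolynomial.X : Fin q → MvPolynomial (Fin q) k))) ^ n,
      MvPolynomial.aeval g a = 0 := by
    intro a ha
    have h1 : Ideal.map (MvPolynomial.aeval g : MvPolynomial (Fin q) k →ₐ[k] NPAux.PB k n)
        (Ideal.span (Set.range (MvPolynomial.X : Fin q → MvPolynomial (Fin q) k)))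
        ≤ Ideal.span {NPAux.zB k n} := by
      rw [Ideal.map_span]
      refine Ideal.span_le.2 ?_
      rintro _ ⟨_, ⟨i, rfl⟩, rfl⟩
      simpa using hg1 i
    have h2 : MvPolynomial.aeval g a ∈ Ideal.map
        (MvPolynomial.aeval g : MvPolynomial (Fin q) k →ₐ[k] NPAux.PB k n)
        ((Ideal.span (Set.range (MvPolynomial.X : Fin q → MvPolynomial (Fin q) k))) ^ n) :=
      Ideal.mem_map_of_mem _ ha
    rw [Ideal.map_pow] at h2
    have h3 := Ideal.pow_right_mono h1 n h2
    rw [Ideal.span_singleton_pow, NPAux.zB_pow_n k n] at h3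
    rwa [Ideal.span_singleton_eq_bot.2 rfl, Ideal.mem_bot] at h3
  set Φ : Aqn k q n →ₐ[k] NPAux.PB k n :=
    Ideal.Quotient.liftₐ _ (MvPolynomial.aeval g) hker0 with hΦdef
  have hΦmk : ∀ p, Φ (Ideal.Quotient.mk _ p) = MvPolynomial.aeval g p := by
    intro p
    have h2 := Ideal.Quotient.liftₐ_comp ((Ideal.span (Set.range (MvPolynomial.X : Fin q → MvPolynomial (Fin q) k))) ^ n) (MvPolynomial.aeval g) hker0
    exact DFunLike.congr_fun h2 p
  have hΦx : ∀ i, Φ (xA k q n i) = g i := by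
    intro i
    rw [xA, hΦmk]
    simp
  have hΦx0 : Φ (xA k q n 0) = NPAux.zB k n := by
    rw [hΦx 0, hgdef]
    simp
  have hΦa : ∀ p : Polynomial k, Φ (Polynomial.aeval (xA k q n 0) p)
      = Polynomial.aeval (NPAux.zB k n) p := by
    intro p
    rw [← hΦx0]
    exact (Polynomial.aeval_algHom_apply Φ (xA k q n 0) p).symm
  have hΦxi : ∀ i : {i : Fin q // i ≠ 0}, Φ (xA k q n i.1)
      = Polynomial.aeval (NPAux.zB k n) (σ i) := by
    intro i
    rw [hΦx i.1, hgdef]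
    simp only [dif_neg i.2]
  have hΦs : ∀ i, Φ (s i) = Polynomial.aeval (NPAux.zB k n) (σ i) := by
    intro i
    rw [← hσev i, hΦa]
  have hΦgen : ∀ i : {i : Fin q // i ≠ 0}, Φ (xA k q n i.1 - s i) = 0 := by
    intro i
    rw [map_sub, hΦxi, hΦs, sub_self]
  have hΦsurj : Function.Surjective Φ := by
    intro y
    obtain ⟨p, rfl⟩ := Ideal.Quotient.mk_surjective y
    exact ⟨Polynomial.aeval (xA k q n 0) p, by rw [hΦa, NPAux.aeval_zB]⟩
  -- the ideal J
  set J := Ideal.span (Set.range fun i : {i : Fin q // i ≠ 0} => xA k q n i.1 - s i) with hJdef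
  have hJq : J ≤ q' := by
    rw [hJdef, Ideal.span_le]; rintro _ ⟨i, rfl⟩; exact hws i
  have hJker : J ≤ RingHom.ker Φ := by
    rw [hJdef, Ideal.span_le]; rintro _ ⟨i, rfl⟩
    exact RingHom.mem_ker.2 (hΦgen i)
  -- the subalgebra generated by x1 as a k-span of powers
  set adj := Submodule.span k (Set.range fun j : ℕ => xA k q n 0 ^ j) with hadjdef
  have hadjmul : ∀ a ∈ adj, ∀ bb ∈ adj, a * bb ∈ adj := by
    intro a ha
    refine Submodule.span_induction (p := fun a _ => ∀ bb ∈ adj, a * bb ∈ adj) ?_ ?_ ?_ ?_ ha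
    · rintro _ ⟨j, rfl⟩ bb hbb
      refine Submodule.span_induction (p := fun bb _ => xA k q n 0 ^ j * bb ∈ adj) ?_ ?_ ?_ ?_ hbb
      · rintro _ ⟨l, rfl⟩
        rw [← pow_add]
        exact Submodule.subset_span ⟨j + l, rfl⟩
      · show xA k q n 0 ^ j * 0 ∈ adj
        rw [mul_zero]; exact zero_mem _
      · intro y z _ _ hy hz
        show xA k q n 0 ^ j * (y + z) ∈ adj
        rw [mul_add]; exact add_mem hy hz
      · intro cc y _ hy
        show xA k q n 0 ^ j * (cc • y) ∈ adj
        rw [mul_smul_comm]; exact Submodule.smul_mem _ _ hy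
    · intro bb hbb
      show (0 : Aqn k q n) * bb ∈ adj
      rw [zero_mul]; exact zero_mem _
    · intro y z _ _ hy hz bb hbb
      show (y + z) * bb ∈ adj
      rw [add_mul]; exact add_mem (hy bb hbb) (hz bb hbb)
    · intro cc y _ hy bb hbb
      show (cc • y) * bb ∈ adj
      rw [smul_mul_assoc]; exact Submodule.smul_mem _ _ (hy bb hbb)
  have hSAadj : SA k q n ≤ adj := by
    rw [SA, hadjdef]
    refine Submodule.span_le.2 ?_
    rintro _ ⟨j, _, _, rfl⟩
    exact Submodule.subset_span ⟨j, rfl⟩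
  have htop : ∀ a : Aqn k q n, a ∈ adj ⊔ Submodule.restrictScalars k J := by
    intro a
    obtain ⟨p, rfl⟩ := Ideal.Quotient.mk_surjective a
    induction p using MvPolynomial.induction_on with
    | C aa =>
        refine Submodule.mem_sup_left ?_
        have h1 : (Ideal.Quotient.mk ((Ideal.span (Set.range (MvPolynomial.X : Fin q → MvPolynomial (Fin q) k))) ^ n) (MvPolynomial.C aa) : Aqn k q n) = aa • (xA k q n 0 ^ 0) := by
          rw [pow_zero]
          have : (Ideal.Quotient.mk ((Ideal.span (Set.range (MvPolynomial.X : Fin q → MvPolynomial (Fin q) k))) ^ n) (MvPolynomial.C aa) : Aqn k q n) = algebraMap k _ aa := rfl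
          rw [this, Algebra.algebraMap_eq_smul_one]
        rw [h1]
        exact Submodule.smul_mem _ _ (Submodule.subset_span ⟨0, rfl⟩)
    | add p1 p2 h1 h2 => rw [map_add]; exact add_mem h1 h2
    | mul_X p i ihp =>
        rw [map_mul]
        have hxi : (Ideal.Quotient.mk ((Ideal.span (Set.range (MvPolynomial.X : Fin q → MvPolynomial (Fin q) k))) ^ n) (MvPolynomial.X i) : Aqn k q n) = xA k q n i := rfl
        rcases Submodule.mem_sup.1 ihp with ⟨α, hα, jj, hjj, hsum⟩
        rw [hxi, ← hsum, add_mul]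
        refine add_mem ?_ (Submodule.mem_sup_right (Ideal.mul_mem_right _ _ hjj))
        by_cases hi : i = 0
        · subst hi
          refine Submodule.mem_sup_left (hadjmul α hα _ ?_)
          exact Submodule.subset_span ⟨1, pow_one _⟩
        · have hdec : α * xA k q n i = α * (xA k q n i - s ⟨i, hi⟩) + α * s ⟨i, hi⟩ := by ring
          rw [hdec]
          refine add_mem (Submodule.mem_sup_right ?_) (Submodule.mem_sup_left ?_)
          · exact Ideal.mul_mem_left _ _ (by rw [hJdef]; exact Ideal.subset_span ⟨⟨i, hi⟩, rfl⟩)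
          · exact hadjmul α hα _ (hSAadj (hsSA ⟨i, hi⟩))
  have hadjrange : adj ≤ LinearMap.range (Polynomial.aeval (xA k q n 0) : Polynomial k →ₐ[k] Aqn k q n).toLinearMap := by
    rw [hadjdef]
    refine Submodule.span_le.2 ?_
    rintro _ ⟨j, rfl⟩
    exact ⟨Polynomial.X ^ j, by simp⟩
  have hkerJ : RingHom.ker Φ ≤ J := by
    intro a ha
    rcases Submodule.mem_sup.1 (htop a) with ⟨α, hα, jj, hjj, hsum⟩
    obtain ⟨p, hp⟩ := hadjrange hα
    have hjk : Φ jj = 0 := RingHom.mem_ker.1 (hJker hjj)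
    have hΦα : Φ α = 0 := by
      have h1 : Φ a = 0 := RingHom.mem_ker.1 ha
      rw [← hsum, map_add, hjk, add_zero] at h1
      exact h1
    have hp' : Polynomial.aeval (xA k q n 0) p = α := hp
    rw [← hp', hΦa, NPAux.aeval_zB] at hΦα
    obtain ⟨t, ht⟩ := Ideal.mem_span_singleton.1 (Ideal.Quotient.eq_zero_iff_mem.1 hΦα)
    have hα0 : α = 0 := by
      rw [← hp', ht, map_mul, map_pow, Polynomial.aeval_X,
        NPAux.xA_pow_zero k q n 0 le_rfl, zero_mul]
    rw [← hsum, hα0, zero_add]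
    exact hjj
  -- Φ bounds on ideals
  have hΦm : Ideal.map Φ (mA k q n) ≤ Ideal.span {NPAux.zB k n} := by
    rw [mA, Ideal.map_span]
    refine Ideal.span_le.2 ?_
    rintro _ ⟨_, ⟨i, rfl⟩, rfl⟩
    simpa [hΦx] using hg1 i
  have hΦm2 : ∀ y ∈ m2k k q n, Φ y ∈ Ideal.span {NPAux.zB k n ^ 2} := by
    intro y hy
    have h1 : Φ y ∈ Ideal.map Φ (mA k q n ^ 2) := Ideal.mem_map_of_mem _ hy
    rw [Ideal.map_pow] at h1
    have h2 := Ideal.pow_right_mono hΦm 2 h1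
    rwa [Ideal.span_singleton_pow] at h2
  have hΦu : ∀ j, Φ (u j) ∈ Ideal.span {NPAux.zB k n ^ 2} := by
    intro j
    have hbj : ((b j : Aqn k q n ⧸ m2k k q n)) ∈
        Submodule.map ((m2k k q n).mkQ) (Omega1A k q n) := (b j).2
    rcases hbj with ⟨ω, hω, hπω⟩
    have hμ : u j - ω ∈ m2k k q n := by
      have h1 : (m2k k q n).mkQ (u j - ω) = 0 := by
        rw [map_sub, hπω, hb j, sub_self]
      rwa [Submodule.mkQ_apply, Submodule.Quotient.mk_eq_zero] at h1
    have hΦω : Φ ω ∈ Ideal.span {NPAux.zB k n ^ 2} := by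
      rw [Omega1A] at hω
      refine Submodule.span_induction (p := fun w _ => Φ w ∈ Ideal.span {NPAux.zB k n ^ 2})
        ?_ ?_ ?_ ?_ hω
      · rintro _ ⟨i, hi, rfl⟩
        rw [hΦx]
        exact hg2 ⟨i, hi⟩
      · show Φ 0 ∈ _; rw [map_zero]; exact zero_mem _
      · intro y z _ _ hy hz; show Φ (y + z) ∈ _; rw [map_add]; exact add_mem hy hz
      · intro cc y _ hy
        show Φ (cc • y) ∈ _
        rw [map_smul, Algebra.smul_def cc (Φ y)]
        exact Ideal.mul_mem_left _ _ hy
    have h2 : u j = ω + (u j - ω) := by ring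
    rw [h2, map_add]
    exact add_mem hΦω (hΦm2 _ hμ)
  have hΦq' : Ideal.map Φ q' ≤ Ideal.span {NPAux.zB k n ^ 2} := by
    rw [hq', Ideal.map_span]
    refine Ideal.span_le.2 ?_
    rintro _ ⟨_, ⟨j, rfl⟩, rfl⟩
    exact hΦu j
  -- q' is contained in the kernel of Φ
  have hq'ker : q' ≤ RingHom.ker Φ := by
    by_contra hcon
    have hKne : Ideal.map Φ q' ≠ ⊥ := by
      intro hbot
      apply hcon
      intro x hx
      have h1 : Φ x ∈ Ideal.map Φ q' := Ideal.mem_map_of_mem _ hx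
      rw [hbot, Ideal.mem_bot] at h1
      exact RingHom.mem_ker.2 h1
    obtain ⟨gp, hgp⟩ :=
      (IsPrincipalIdealRing.principal (Ideal.comap (NPAux.mkB k n) (Ideal.map Φ q'))).principal
    have hXnL : (Polynomial.X : Polynomial k) ^ n ∈
        Ideal.comap (NPAux.mkB k n) (Ideal.map Φ q') := by
      rw [Ideal.mem_comap, map_pow]
      rw [NPAux.zB_pow_n k n]
      exact zero_mem _
    have hdvd : gp ∣ (Polynomial.X : Polynomial k) ^ n := by
      rw [hgp] at hXnL
      exact Ideal.mem_span_singleton.1 hXnL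
    obtain ⟨j, hjn, hassoc⟩ := (dvd_prime_pow Polynomial.prime_X n).1 hdvd
    have hLj : Ideal.comap (NPAux.mkB k n) (Ideal.map Φ q')
        = Ideal.span {(Polynomial.X : Polynomial k) ^ j} := by
      rw [hgp]
      exact Ideal.span_singleton_eq_span_singleton.2 hassoc
    have hK : Ideal.map Φ q' = Ideal.span {NPAux.zB k n ^ j} := by
      have h1 := Ideal.map_comap_of_surjective (NPAux.mkB k n)
        Ideal.Quotient.mk_surjective (Ideal.map Φ q')
      rw [← h1, hLj, Ideal.map_span, Set.image_singleton, map_pow]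
    have hjlt : j < n := by
      rcases lt_or_eq_of_le hjn with h | h
      · exact h
      · exfalso
        apply hKne
        rw [hK, h, NPAux.zB_pow_n k n]
        exact Ideal.span_singleton_eq_bot.2 rfl
    have hj2 : 2 ≤ j := by
      refine NPAux.zB_pow_mem k n (by omega) ?_
      exact hΦq' (hK ▸ Ideal.subset_span rfl)
    obtain ⟨y, hyq, hy⟩ := (Ideal.mem_map_iff_of_surjective Φ hΦsurj).1
      (hK ▸ (Ideal.subset_span rfl : NPAux.zB k n ^ j ∈ Ideal.span {NPAux.zB k n ^ j}))
    have hx1j : xA k q n 0 ^ j ∈ q' := by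
      have h1 : xA k q n 0 ^ j - y ∈ RingHom.ker Φ := by
        rw [RingHom.mem_ker, map_sub, map_pow, hΦx0, hy, sub_self]
      have h2 : xA k q n 0 ^ j - y ∈ q' := hJq (hkerJ h1)
      have h3 : xA k q n 0 ^ j = (xA k q n 0 ^ j - y) + y := by ring
      rw [h3]
      exact add_mem h2 hyq
    -- the independence contradiction
    have hN2M : Submodule.restrictScalars k (mA k q n * q') ≤ m2k k q n := by
      intro y2 hy2
      have h1 : mA k q n * q' ≤ mA k q n * mA k q n := Ideal.mul_mono_right hq'm
      have h2 : mA k q n * mA k q n = mA k q n ^ 2 := (sq (mA k q n)).symm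
      exact (h2 ▸ h1) hy2
    set N2 := Submodule.restrictScalars k (mA k q n * q') with hN2def
    have hq'W : ∀ y2 ∈ q', (N2.mkQ) y2 ∈
        Submodule.span k (Set.range fun i => N2.mkQ (u i)) := by
      intro y2 hy2
      have h1 : y2 ∈ Submodule.span k (Set.range u) ⊔ N2 := by
        have h2 := NPAux.idealSpan_le k q n hn0 (Set.range u) (by rw [← hq']; exact hy2)
        rw [hN2def, hq']
        exact h2
      rcases Submodule.mem_sup.1 h1 with ⟨y3, hy3, y4, hy4, hsum⟩
      rw [← hsum, map_add]
      have h2 : N2.mkQ y4 = 0 := by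
        rw [Submodule.mkQ_apply, Submodule.Quotient.mk_eq_zero]; exact hy4
      rw [h2, add_zero]
      have h3 : Submodule.map N2.mkQ (Submodule.span k (Set.range u))
          = Submodule.span k (Set.range fun i => N2.mkQ (u i)) := by
        rw [Submodule.map_span, ← Set.range_comp]; rfl
      exact h3 ▸ Submodule.mem_map_of_mem hy3
    have hindF : LinearIndependent k (fun o : Option {i : Fin q // i ≠ 0} =>
        Option.elim o (N2.mkQ (xA k q n 0 ^ j)) (fun i => N2.mkQ (xA k q n i.1 - s i))) := by
      rw [Fintype.linearIndependent_iff]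
      intro gc hgc
      rw [Fintype.sum_option] at hgc
      have hgsum : gc none • (xA k q n 0 ^ j)
          + ∑ i, gc (some i) • (xA k q n i.1 - s i) ∈ N2 := by
        rw [← Submodule.Quotient.mk_eq_zero, ← Submodule.mkQ_apply, map_add, map_smul, map_sum]
        simpa [map_smul] using hgc
      have hyM : gc none • (xA k q n 0 ^ j)
          + ∑ i, gc (some i) • (xA k q n i.1 - s i) ∈ m2k k q n := hN2M hgsum
      have hsM : (∑ i, gc (some i) • s i) ∈ m2k k q n :=
        Submodule.sum_mem _ (fun i _ => Submodule.smul_mem _ _ (NPAux.SA_le_m2 k q n (hsSA i)))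
      have hxjM : (xA k q n 0 ^ j) ∈ m2k k q n :=
        (Ideal.pow_le_pow_right hj2) (Ideal.pow_mem_pow (NPAux.xA_mem_mA k q n 0) j)
      have hxM : (∑ i, gc (some i) • xA k q n i.1) ∈ m2k k q n := by
        have hre : (∑ i, gc (some i) • xA k q n i.1)
            = (gc none • (xA k q n 0 ^ j) + ∑ i, gc (some i) • (xA k q n i.1 - s i))
              - gc none • (xA k q n 0 ^ j) + ∑ i, gc (some i) • s i := by
          rw [add_sub_cancel_left, ← Finset.sum_add_distrib]
          congr 1
          ext i
          rw [smul_sub]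
          ring
        rw [hre]
        exact add_mem (sub_mem hyM (Submodule.smul_mem _ _ hxjM)) hsM
      have hv0 : (∑ i, gc (some i) • v i) = 0 := by
        apply Subtype.ext
        simp only [ZeroMemClass.coe_zero]
        have hco : ((∑ i, gc (some i) • v i : Submodule.map ((m2k k q n).mkQ) (Omega1A k q n)) :
            Aqn k q n ⧸ m2k k q n) = ∑ i, gc (some i) • ((m2k k q n).mkQ (xA k q n i.1)) := by
          push_cast
          rfl
        rw [hco]
        have h5 : (∑ i, gc (some i) • ((m2k k q n).mkQ (xA k q n i.1)))
            = (m2k k q n).mkQ (∑ i, gc (some i) • xA k q n i.1) := by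
          rw [map_sum]
          simp [map_smul]
        rw [h5, Submodule.mkQ_apply, Submodule.Quotient.mk_eq_zero]
        simpa using hxM
      have hg0 : ∀ i, gc (some i) = 0 := Fintype.linearIndependent_iff.1 hv _ hv0
      intro o
      rcases o with _ | i
      · by_contra h0
        have h6 : gc none • (xA k q n 0 ^ j) ∈ N2 := by
          have h7 : (∑ i, gc (some i) • (xA k q n i.1 - s i)) = 0 := by
            refine Finset.sum_eq_zero ?_
            intro i _
            rw [hg0 i, zero_smul]
          rwa [h7, add_zero] at hgsum
        have h8 : xA k q n 0 ^ j ∈ N2 := by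
          have h9 := Submodule.smul_mem N2 (gc none)⁻¹ h6
          rwa [inv_smul_smul₀ h0] at h9
        have h10 : Φ (xA k q n 0 ^ j) ∈ Ideal.map Φ (mA k q n * q') := Ideal.mem_map_of_mem _ h8
        rw [Ideal.map_mul] at h10
        have h11 : Ideal.map Φ (mA k q n) * Ideal.map Φ q'
            ≤ Ideal.span {NPAux.zB k n} * Ideal.span {NPAux.zB k n ^ j} :=
          Ideal.mul_mono hΦm (le_of_eq hK)
        have h12 := h11 h10
        rw [Ideal.span_singleton_mul_span_singleton, ← pow_succ'] at h12
        rw [map_pow, hΦx0] at h12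
        have h13 := NPAux.zB_pow_mem k n (by omega : j + 1 ≤ n) h12
        omega
      · exact hg0 i
    have hcard : Fintype.card (Option {i : Fin q // i ≠ 0})
        ≤ Fintype.card {i : Fin q // i ≠ 0} := by
      set W := Submodule.span k (Set.range fun i => N2.mkQ (u i)) with hWdef
      haveI : FiniteDimensional k W := FiniteDimensional.span_of_finite k (Set.finite_range _)
      have hmemW : ∀ o : Option {i : Fin q // i ≠ 0},
          Option.elim o (N2.mkQ (xA k q n 0 ^ j)) (fun i => N2.mkQ (xA k q n i.1 - s i)) ∈ W := by
        intro o
        rcases o with _ | i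
        · exact hq'W _ hx1j
        · exact hq'W _ (hws i)
      set F' : Option {i : Fin q // i ≠ 0} → W := fun o => ⟨_, hmemW o⟩ with hF'def
      have hF' : LinearIndependent k F' := by
        apply LinearIndependent.of_comp W.subtype
        exact hindF
      have h1 := hF'.fintype_card_le_finrank
      refine h1.trans ?_
      exact finrank_range_le_card _
    rw [Fintype.card_option] at hcard
    omega
  have hkerΦ : RingHom.ker Φ = J := le_antisymm hkerJ hJker
  have hq'J : q' = J := le_antisymm (by rw [← hkerΦ]; exact hq'ker) hJq
  -- injectivity of Φ on SA
  have hSAinj : ∀ s1 ∈ SA k q n, ∀ s2 ∈ SA k q n, Φ s1 = Φ s2 → s1 = s2 := by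
    intro s1 hs1 s2 hs2 heq
    obtain ⟨p1, hp1SP, hp1⟩ := NPAux.SA_rep k q n hs1
    obtain ⟨p2, hp2SP, hp2⟩ := NPAux.SA_rep k q n hs2
    rw [← hp1, ← hp2, hΦa, hΦa] at heq
    have h2 : NPAux.mkB k n (p1 - p2) = 0 := by
      rw [map_sub, ← NPAux.aeval_zB, ← NPAux.aeval_zB, heq, sub_self]
    have h3 : (p1 - p2).degree < (n : WithBot ℕ) :=
      (Polynomial.degree_sub_le _ _).trans_lt
        (max_lt (NPAux.SPs_degree k n hp1SP) (NPAux.SPs_degree k n hp2SP))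
    have h4 := NPAux.mkB_inj_small k n h3 h2
    have h5 : p1 = p2 := sub_eq_zero.1 h4
    rw [← hp1, ← hp2, h5]
  -- the linear map γ
  set γ : Omega1A k q n →ₗ[k] Aqn k q n := Module.Basis.constr eB k s with hγdef
  have hγe : ∀ i, γ (e i) = s i := by
    intro i
    have h1 : eB i = e i := Module.Basis.mk_apply heind hespan i
    rw [hγdef, ← h1]
    exact Module.Basis.constr_basis eB k s i
  have hγSA : ∀ w, γ w ∈ SA k q n := by
    intro w
    have hw : w ∈ Submodule.span k (Set.range eB) := by
      rw [Module.Basis.span_eq]; trivial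
    refine Submodule.span_induction (p := fun w _ => γ w ∈ SA k q n) ?_ ?_ ?_ ?_ hw
    · rintro _ ⟨i, rfl⟩
      rw [show eB i = e i from Module.Basis.mk_apply heind hespan i, hγe]
      exact hsSA i
    · show γ 0 ∈ _; rw [map_zero]; exact zero_mem _
    · intro y z _ _ hy hz; show γ (y + z) ∈ _; rw [map_add]; exact add_mem hy hz
    · intro cc y _ hy; show γ (cc • y) ∈ _; rw [map_smul]; exact Submodule.smul_mem _ _ hy
  have hsetJ : {y | ∃ i : {i : Fin q // i ≠ 0},
      y = xA k q n i.1 - γ ⟨xA k q n i.1, Submodule.subset_span ⟨i.1, i.2, rfl⟩⟩}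
      = Set.range (fun i : {i : Fin q // i ≠ 0} => xA k q n i.1 - s i) := by
    ext y
    constructor
    · rintro ⟨i, rfl⟩
      exact ⟨i, by rw [show (⟨xA k q n i.1, Submodule.subset_span ⟨i.1, i.2, rfl⟩⟩ :
        Omega1A k q n) = e i from rfl, hγe]⟩
    · rintro ⟨i, rfl⟩
      exact ⟨i, by rw [show (⟨xA k q n i.1, Submodule.subset_span ⟨i.1, i.2, rfl⟩⟩ :
        Omega1A k q n) = e i from rfl, hγe]⟩
  constructor
  · -- part (a)
    refine ⟨Φ, ⟨hΦx0, by rw [hkerΦ, hq'J]⟩, ?_⟩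
    rintro ψ ⟨hψ1, hψ2⟩
    apply Ideal.Quotient.algHom_ext
    apply MvPolynomial.algHom_ext
    intro i
    show ψ (xA k q n i) = Φ (xA k q n i)
    by_cases hi : i = 0
    · subst hi
      rw [hΦx0, hψ1]
    · have h1 : xA k q n i - s ⟨i, hi⟩ ∈ RingHom.ker ψ := by
        rw [hψ2]; exact hws ⟨i, hi⟩
      have h2 : ψ (xA k q n i) = ψ (s ⟨i, hi⟩) := by
        have h3 := RingHom.mem_ker.1 h1
        rw [map_sub, sub_eq_zero] at h3
        exact h3
      rw [h2, ← hσev ⟨i, hi⟩, ← Polynomial.aeval_algHom_apply ψ (xA k q n 0) (σ ⟨i, hi⟩),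
        hψ1, hΦxi ⟨i, hi⟩]
  · -- part (b)
    refine ⟨γ, ⟨hγSA, ?_⟩, ?_⟩
    · rw [hsetJ, hq'J, hJdef]
    · rintro γ2 ⟨hγ2SA, hγ2span⟩
      refine Module.Basis.ext eB ?_
      intro i
      rw [show eB i = e i from Module.Basis.mk_apply heind hespan i, hγe]
      have h1 : xA k q n i.1 - γ2 (e i) ∈ q' := by
        rw [hγ2span]
        exact Ideal.subset_span ⟨i, rfl⟩
      have h2 : Φ (γ2 (e i)) = Φ (s i) := by
        have h3 : Φ (xA k q n i.1 - γ2 (e i)) = 0 := RingHom.mem_ker.1 (hq'ker h1)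
        have h4 : Φ (xA k q n i.1 - s i) = 0 := hΦgen i
        rw [map_sub, sub_eq_zero] at h3 h4
        rw [← h3, ← h4]
      exact hSAinj _ (hγ2SA (e i)) _ (hsSA i) h2
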